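/- arXiv:1302.5549 — 2 statements merged into one kernel-verified Lean document; each statement's English description precedes it below -/
import Mathlib

section
/- Let G1 = (V1, E1) and G2 = (V2, E2) be well-formed graphs over the same node type such that the sets V2 \ V1, V1 \ V2, E2 \ E1 and E1 \ E2 are finite. Applying the operations of the delta Δ(G1, G2) to G1 in the order: first all remEdge operations, then all remNode operations, then all addNode operations, then all addEdge operations, yields exactly the graph G2. -/
/-- A graph over a node type `α`: a set of nodes and a set of edges
(unordered pairs of nodes). -/
structure DeltaGraph (α : Type*) where
  V : Set α
  E : Set (Sym2 α)

/-- A graph is well-formed if its edges are pairs of *distinct* nodes and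
both endpoints of every edge belong to the node set. -/
def DeltaGraph.WellFormed {α : Type*} (G : DeltaGraph α) : Prop :=
  (∀ e ∈ G.E, ¬ e.IsDiag) ∧ ∀ e ∈ G.E, ∀ v ∈ e, v ∈ G.V

/-- Update operations on graphs. -/
inductive Op (α : Type*) where
  | addNode (v : α)
  | remNode (v : α)
  | addEdge (e : Sym2 α)
  | remEdge (e : Sym2 α)

/-- The delta Δ(G1, G2). -/
def delta {α : Type*} (G1 G2 : DeltaGraph α) : Set (Op α) :=
  (Op.addNode '' (G2.V \ G1.V)) ∪ (Op.remNode '' (G1.V \ G2.V)) ∪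
  (Op.addEdge '' (G2.E \ G1.E)) ∪
  (Op.remEdge '' {e | e ∈ G1.E \ G2.E ∧ ∀ v ∈ e, v ∈ G2.V})

/-- The result of applying a set `S` of operations to a graph `G` in the order:
first all `remEdge` operations, then all `remNode` operations
(each of which removes the node and its incident edges),
then all `addNode` operations, then all `addEdge` operations. -/
def applyDelta {α : Type*} (S : Set (Op α)) (G : DeltaGraph α) : DeltaGraph α :=
  ⟨(G.V \ {v | Op.remNode v ∈ S}) ∪ {v | Op.addNode v ∈ S},
   {e ∈ G.E | Op.remEdge e ∉ S ∧ ∀ v ∈ e, Op.remNode v ∉ S} ∪ {e | Op.addEdge e ∈ S}⟩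

/-- Applying the operations of Δ(G1, G2) to G1, in the order
remEdge / remNode / addNode / addEdge, yields exactly G2. -/
theorem delta_apply {α : Type*} (G1 G2 : DeltaGraph α)
    (h1 : G1.WellFormed) (h2 : G2.WellFormed)
    (hfV₁ : (G2.V \ G1.V).Finite) (hfV₂ : (G1.V \ G2.V).Finite)
    (hfE₁ : (G2.E \ G1.E).Finite) (hfE₂ : (G1.E \ G2.E).Finite) :
    applyDelta (delta G1 G2) G1 = G2 := by
  obtain ⟨-, h1V⟩ := h1
  obtain ⟨-, h2V⟩ := h2
  have hA : ∀ v : α, Op.addNode v ∈ delta G1 G2 ↔ v ∈ G2.V ∧ v ∉ G1.V := by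
    intro v; simp [delta]
  have hR : ∀ v : α, Op.remNode v ∈ delta G1 G2 ↔ v ∈ G1.V ∧ v ∉ G2.V := by
    intro v; simp [delta]
  have hAE : ∀ e : Sym2 α, Op.addEdge e ∈ delta G1 G2 ↔ e ∈ G2.E ∧ e ∉ G1.E := by
    intro e; simp [delta]
  have hRE : ∀ e : Sym2 α, Op.remEdge e ∈ delta G1 G2 ↔
      (e ∈ G1.E ∧ e ∉ G2.E) ∧ ∀ v ∈ e, v ∈ G2.V := by
    intro e; simp only [delta, Set.mem_union, Set.mem_image, Set.mem_setOf_eq, Set.mem_diff]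
    aesop
  obtain ⟨V2, E2⟩ := G2
  simp only [applyDelta, DeltaGraph.mk.injEq]
  constructor
  · ext v
    simp only [Set.mem_union, Set.mem_diff, Set.mem_setOf_eq, hA, hR]
    tauto
  · ext e
    simp only [Set.mem_union, Set.mem_setOf_eq, Set.mem_sep_iff, hAE, hRE, hR]
    constructor
    · rintro (⟨he1, hne, hnn⟩ | ⟨he2, -⟩)
      · by_contra he2
        exact hne ⟨⟨he1, he2⟩, fun v hv => by have := hnn v hv; have := h1V e he1 v hv; tauto⟩
      · exact he2
    · intro he2
      by_cases he1 : e ∈ G1.E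
      · exact Or.inl ⟨he1, fun h => h.1.2 he2, fun v hv h => h.2 (h2V e he2 v hv)⟩
      · exact Or.inr ⟨he2, he1⟩
end

section
/- If G is a well-formed graph and op is an operation that is valid at G, then applying the inverse operation inv(op) to the graph obtained by applying op to G yields back the graph G. -/
/-- A graph over a node type `α`: a set of nodes and a set of edges
(unordered pairs of nodes). -/
structure OpGraph (α : Type*) where
  V : Set α
  E : Set (Sym2 α)

/-- A graph is well-formed if its edges are pairs of *distinct* nodes and
both endpoints of every edge belong to the node set. -/
def OpGraph.WellFormed {α : Type*} (G : OpGraph α) : Prop :=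
  (∀ e ∈ G.E, ¬ e.IsDiag) ∧ ∀ e ∈ G.E, ∀ v ∈ e, v ∈ G.V

/-- The action of a single operation on a graph: `addNode v` adds the node `v`;
`remNode v` removes `v` and all edges incident to it; `addEdge e` adds the edge `e`;
`remEdge e` removes the edge `e`. -/
def applyOp {α : Type*} (G : OpGraph α) : Op α → OpGraph α
  | Op.addNode v => ⟨G.V ∪ {v}, G.E⟩
  | Op.remNode v => ⟨G.V \ {v}, {e ∈ G.E | v ∉ e}⟩
  | Op.addEdge e => ⟨G.V, G.E ∪ {e}⟩
  | Op.remEdge e => ⟨G.V, G.E \ {e}⟩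

/-- Applying a sequence of operations to a graph, from left to right. -/
def applySeq {α : Type*} (G : OpGraph α) (l : List (Op α)) : OpGraph α :=
  l.foldl applyOp G

/-- Validity of an operation at a graph. -/
def validAt {α : Type*} (G : OpGraph α) : Op α → Prop
  | Op.addNode v => v ∉ G.V
  | Op.remNode v => v ∈ G.V ∧ ∀ e ∈ G.E, v ∉ e
  | Op.addEdge e => ¬ e.IsDiag ∧ (∀ v ∈ e, v ∈ G.V) ∧ e ∉ G.E
  | Op.remEdge e => e ∈ G.E

/-- The inverse of an operation. -/
def Op.inv {α : Type*} : Op α → Op α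
  | Op.addNode v => Op.remNode v
  | Op.remNode v => Op.addNode v
  | Op.addEdge e => Op.remEdge e
  | Op.remEdge e => Op.addEdge e

/-- Validity of a sequence of operations at a graph: each operation is valid at the
graph obtained by applying the preceding operations. -/
def validSeq {α : Type*} : OpGraph α → List (Op α) → Prop
  | _, [] => True
  | G, op :: rest => validAt G op ∧ validSeq (applyOp G op) rest
@[ext] lemma OpGraph.ext' {α : Type*} {G H : OpGraph α}
    (hV : G.V = H.V) (hE : G.E = H.E) : G = H := by
  cases G; cases H; simp_all

/-- Applying the inverse of a valid operation undoes the operation. -/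
theorem applyOp_inv {α : Type*} (G : OpGraph α) (op : Op α)
    (hwf : G.WellFormed) (hval : validAt G op) :
    applyOp (applyOp G op) op.inv = G := by
  obtain ⟨hd, hinc⟩ := hwf
  cases op with
  | addNode v =>
    simp only [applyOp, Op.inv, validAt] at *
    ext x
    · simp only [Set.mem_diff, Set.mem_union, Set.mem_singleton_iff]
      constructor
      · rintro ⟨h | h, _⟩ <;> tauto
      · intro h; exact ⟨Or.inl h, fun he => hval (he ▸ h)⟩
    · simp only [Set.mem_setOf_eq]
      constructor
      · rintro ⟨h, _⟩; exact h
      · intro h; exact ⟨h, fun hv => hval (hinc x h v hv)⟩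
  | remNode v =>
    obtain ⟨hv, hE⟩ := hval
    simp only [applyOp, Op.inv]
    ext x
    · simp only [Set.mem_union, Set.mem_diff, Set.mem_singleton_iff]
      constructor
      · rintro (⟨h, _⟩ | h)
        · exact h
        · exact h ▸ hv
      · intro h
        by_cases hx : x = v
        · exact Or.inr hx
        · exact Or.inl ⟨h, hx⟩
    · simp only [Set.mem_setOf_eq]
      exact ⟨fun ⟨h, _⟩ => h, fun h => ⟨h, hE x h⟩⟩
  | addEdge e =>
    obtain ⟨_, _, he⟩ := hval
    simp only [applyOp, Op.inv]
    ext x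
    · simp
    · simp only [Set.mem_diff, Set.mem_union, Set.mem_singleton_iff]
      constructor
      · rintro ⟨h | h, hx⟩
        · exact h
        · exact absurd h hx
      · intro h; exact ⟨Or.inl h, fun hx => he (hx ▸ h)⟩
  | remEdge e =>
    simp only [applyOp, Op.inv]
    ext x
    · simp
    · simp only [Set.mem_union, Set.mem_diff, Set.mem_singleton_iff]
      constructor
      · rintro (⟨h, _⟩ | h)
        · exact h
        · exact h ▸ hval
      · intro h
        by_cases hx : x = e
        · exact Or.inr hx
        · exact Or.inl ⟨h, hx⟩
end
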